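/- Let n be an odd integer with prime factorization n = ∏ p^(α_p) over the set P of primes dividing n. Then the number of automorphisms f of ℤ/nℤ such that x ↦ x - f(x) is injective equals ∏_{p ∈ P} p^(α_p - 1)(p - 2). -/

import Mathlib

open Function

private lemma isUnit_prod_iff' {M N : Type*} [Monoid M] [Monoid N] {p : M × N} :
    IsUnit p ↔ IsUnit p.1 ∧ IsUnit p.2 := by
  constructor
  · intro h
    exact ⟨h.map (MonoidHom.fst M N), h.map (MonoidHom.snd M N)⟩
  · rintro ⟨⟨u, hu⟩, ⟨v, hv⟩⟩
    exact ⟨⟨((u : M), (v : N)), ((↑u⁻¹ : M), (↑v⁻¹ : N)),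
      by rw [Prod.mk_mul_mk]; simp, by rw [Prod.mk_mul_mk]; simp⟩, Prod.ext hu hv⟩

noncomputable def biCount (n : ℕ) : ℕ :=
  Nat.card {a : ZMod n // IsUnit a ∧ IsUnit (1 - a)}

lemma biCount_one : biCount 1 = 1 := by
  have h : ∀ a : ZMod 1, IsUnit a ∧ IsUnit (1 - a) := by
    intro a
    constructor <;> exact IsUnit.of_mul_eq_one 1 (Subsingleton.elim _ _)
  rw [biCount, Nat.card_congr (Equiv.subtypeUnivEquiv h), Nat.card_eq_fintype_card,
    ZMod.card]

lemma biCount_mul {m k : ℕ} (h : m.Coprime k) :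
    biCount (m * k) = biCount m * biCount k := by
  let e := ZMod.chineseRemainder h
  have h1 : ∀ x : ZMod (m * k), IsUnit x ↔ IsUnit (e x) := by
    intro x
    constructor
    · exact fun hx => hx.map e.toRingHom
    · intro hx
      have := hx.map e.symm.toRingHom
      simpa using this
  have key : biCount (m * k) =
      Nat.card {q : ZMod m × ZMod k //
        (IsUnit q.1 ∧ IsUnit (1 - q.1)) ∧ (IsUnit q.2 ∧ IsUnit (1 - q.2))} := by
    refine Nat.card_congr (Equiv.subtypeEquiv e.toEquiv fun a => ?_)
    have h2 : e (1 - a) = 1 - e a := by rw [map_sub, map_one]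
    rw [h1 a, h1 (1 - a), h2, isUnit_prod_iff', isUnit_prod_iff']
    simp only [RingEquiv.toEquiv_eq_coe, EquivLike.coe_coe, Prod.fst_sub, Prod.fst_one,
      Prod.snd_sub, Prod.snd_one]
    tauto
  rw [key,
    Nat.card_congr (Equiv.subtypeProdEquivProd
      (p := fun a : ZMod m => IsUnit a ∧ IsUnit (1 - a))
      (q := fun a : ZMod k => IsUnit a ∧ IsUnit (1 - a))),
    Nat.card_prod]
  rfl

lemma card_isUnit_filter (m : ℕ) [NeZero m] :
    (Finset.univ.filter fun a : ZMod m => IsUnit a).card = m.totient := by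
  rw [← ZMod.card_units_eq_totient, ← Fintype.card_subtype]
  refine Fintype.card_congr ?_
  exact {
    toFun := fun a => a.2.unit
    invFun := fun u => ⟨(u : ZMod m), u.isUnit⟩
    left_inv := fun a => Subtype.ext a.2.unit_spec
    right_inv := fun u => Units.ext (IsUnit.unit_spec _) }

lemma biCount_prime_pow {p k : ℕ} (hp : p.Prime) (hk : 1 ≤ k) :
    biCount (p ^ k) = p ^ (k - 1) * (p - 2) := by
  haveI : Fact p.Prime := ⟨hp⟩
  haveI : NeZero (p ^ k) := ⟨pow_ne_zero k hp.pos.ne'⟩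
  classical
  -- characterisation of non-units
  have key : ∀ a : ZMod (p ^ k), ¬ IsUnit a ↔ p ∣ a.val := by
    intro a
    have h1 : IsUnit a ↔ Nat.Coprime a.val (p ^ k) := by
      conv_lhs => rw [← ZMod.natCast_rightInverse a]
      exact ZMod.isUnit_iff_coprime _ _
    rw [h1, Nat.coprime_pow_right_iff hk, Nat.coprime_comm, hp.coprime_iff_not_dvd, not_not]
  -- the two "bad" sets are disjoint
  have hdisj : ∀ a : ZMod (p ^ k), ¬ IsUnit a → ¬ IsUnit (1 - a) → False := by
    intro a ha hb
    rw [key] at ha hb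
    let φ : ZMod (p ^ k) →+* ZMod p := ZMod.castHom (dvd_pow_self p (by omega)) (ZMod p)
    have hφ : ∀ x : ZMod (p ^ k), p ∣ x.val → φ x = 0 := by
      intro x hx
      have : φ x = ((x.val : ℕ) : ZMod p) := by
        rw [ZMod.castHom_apply, ← ZMod.natCast_val]
      rw [this, ZMod.natCast_eq_zero_iff]
      exact hx
    have h1 : φ a = 0 := hφ _ ha
    have h2 : φ (1 - a) = 0 := hφ _ hb
    rw [map_sub, map_one, h1, sub_zero] at h2
    exact one_ne_zero h2
  set S := Finset.univ.filter fun a : ZMod (p ^ k) => IsUnit a ∧ IsUnit (1 - a) with hS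
  set A := Finset.univ.filter fun a : ZMod (p ^ k) => ¬ IsUnit a with hA
  set B := Finset.univ.filter fun a : ZMod (p ^ k) => ¬ IsUnit (1 - a) with hB
  have hcount : biCount (p ^ k) = S.card := by
    rw [biCount, Nat.card_eq_fintype_card, Fintype.card_subtype]
  -- B has same cardinality as A
  have hBA : B.card = A.card := by
    refine Finset.card_bij' (fun a _ => 1 - a) (fun a _ => 1 - a) ?_ ?_ ?_ ?_
    · intro a hha
      simp only [hB, Finset.mem_filter, Finset.mem_univ, true_and] at hha
      simp only [hA, Finset.mem_filter, Finset.mem_univ, true_and]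
      exact hha
    · intro a hha
      simp only [hA, Finset.mem_filter, Finset.mem_univ, true_and] at hha
      simp only [hB, Finset.mem_filter, Finset.mem_univ, true_and, sub_sub_cancel]
      exact hha
    · intro a _; exact sub_sub_cancel 1 a
    · intro a _; exact sub_sub_cancel 1 a
  -- A's cardinality
  have hAcard : A.card + (p ^ k).totient = p ^ k := by
    rw [← card_isUnit_filter (p ^ k)]
    rw [hA]
    rw [add_comm]
    rw [Finset.card_filter_add_card_filter_not]
    simp [ZMod.card]
  -- partition
  have hdisjSAB : Disjoint S (A ∪ B) := by
    rw [Finset.disjoint_union_right]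
    constructor <;>
      · rw [Finset.disjoint_left]
        intro a haS haAB
        simp only [hS, hA, hB, Finset.mem_filter, Finset.mem_univ, true_and] at haS haAB
        tauto
  have hdisjAB : Disjoint A B := by
    rw [Finset.disjoint_left]
    intro a haA haB
    simp only [hA, hB, Finset.mem_filter, Finset.mem_univ, true_and] at haA haB
    exact hdisj a haA haB
  have hunion : S ∪ (A ∪ B) = Finset.univ := by
    refine Finset.eq_univ_iff_forall.mpr fun a => ?_
    simp only [Finset.mem_union, hS, hA, hB, Finset.mem_filter, Finset.mem_univ, true_and]
    tauto
  have hsum : S.card + (A.card + B.card) = p ^ k := by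
    rw [← Finset.card_union_of_disjoint hdisjAB, ← Finset.card_union_of_disjoint hdisjSAB,
      hunion]
    simp [ZMod.card]
  -- arithmetic
  have htot : (p ^ k).totient = p ^ (k - 1) * (p - 1) := by
    have := Nat.totient_prime_pow hp (by omega : 0 < k)
    simpa using this
  have hpk : p ^ k = p ^ (k - 1) * p := by
    conv_lhs => rw [show k = (k - 1) + 1 by omega]
    rw [pow_succ]
  rw [hcount]
  rw [hBA] at hsum
  have hp2 : 2 ≤ p := hp.two_le
  have e1 : p ^ (k - 1) * (p - 1) + p ^ (k - 1) = p ^ (k - 1) * p := by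
    rw [← Nat.mul_succ]
    congr 1
    omega
  have e2 : p ^ (k - 1) * (p - 2) + p ^ (k - 1) * 2 = p ^ (k - 1) * p := by
    rw [← Nat.mul_add]
    congr 1
    omega
  omega

lemma biCount_eq (n : ℕ) (hn : n ≠ 0) :
    biCount n = ∏ p ∈ n.primeFactors, p ^ (n.factorization p - 1) * (p - 2) := by
  have hmult : ∀ x y : ℕ, Nat.Coprime x y → biCount (x * y) = biCount x * biCount y :=
    fun x y h => biCount_mul h
  rw [Nat.multiplicative_factorization biCount hmult biCount_one hn,
    Nat.prod_factorization_eq_prod_primeFactors]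
  refine Finset.prod_congr rfl fun p hp => ?_
  have hpp : p.Prime := Nat.prime_of_mem_primeFactors hp
  have hpos : 0 < n.factorization p :=
    (Nat.Prime.factorization_pos_of_dvd hpp hn (Nat.dvd_of_mem_primeFactors hp))
  exact biCount_prime_pow hpp hpos

theorem count_biantiautomorphisms (n : ℕ) (ho : Odd n) :
    {f : ZMod n ≃+ ZMod n | Function.Injective (fun x => x - f x)}.ncard
      = ∏ p ∈ n.primeFactors, p ^ (n.factorization p - 1) * (p - 2) := by
  have hn : n ≠ 0 := by rintro rfl; simpa using ho
  haveI : NeZero n := ⟨hn⟩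
  rw [← biCount_eq n hn, ← Nat.card_coe_set_eq]
  refine Nat.card_congr ?_
  have hf : ∀ (f : ZMod n ≃+ ZMod n) (x : ZMod n), f x = f 1 * x := by
    intro f x
    rw [mul_comm]
    rw [← x.intCast_zmod_cast, ← zsmul_eq_mul, ← map_zsmul, zsmul_one]
  have hiff : ∀ f : ZMod n ≃+ ZMod n,
      Function.Injective (fun x => x - f x) ↔ IsUnit (1 - f 1) := by
    intro f
    have h2 : (fun x : ZMod n => x - f x) = fun x => (1 - f 1) * x := by
      funext x; rw [hf f x]; ring
    rw [h2]
    constructor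
    · intro hinj
      obtain ⟨x, hx⟩ := (Finite.injective_iff_surjective.mp hinj) 1
      exact IsUnit.of_mul_eq_one x hx
    · intro hu x y hxy
      exact hu.mul_left_cancel hxy
  let e := (ZMod.AddAutEquivUnits n).toEquiv.trans Additive.toMul
  have hecoe : ∀ f : ZMod n ≃+ ZMod n, ((e f : (ZMod n)ˣ) : ZMod n) = f 1 := by
    intro f
    simp [e, ZMod.AddAutEquivUnits]
    rfl
  have E1 : {f : ZMod n ≃+ ZMod n // Function.Injective (fun x => x - f x)} ≃
      {u : (ZMod n)ˣ // IsUnit (1 - (u : ZMod n))} := by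
    refine Equiv.subtypeEquiv e fun f => ?_
    have h3 : ((e f : (ZMod n)ˣ) : ZMod n) = f 1 := hecoe f
    rw [hiff f, h3]
  have E2 : {u : (ZMod n)ˣ // IsUnit (1 - (u : ZMod n))} ≃
      {a : ZMod n // IsUnit a ∧ IsUnit (1 - a)} :=
    { toFun := fun u => ⟨(u.1 : ZMod n), u.1.isUnit, u.2⟩
      invFun := fun a => ⟨a.2.1.unit, by simp only [IsUnit.unit_spec]; exact a.2.2⟩
      left_inv := fun u => Subtype.ext (Units.ext (IsUnit.unit_spec _))
      right_inv := fun a => Subtype.ext a.2.1.unit_spec }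
  exact E1.trans E2
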